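/- arXiv:1105.0871 — 2 statements merged into one kernel-verified Lean document; each statement's English description precedes it below -/
import Mathlib

section
/- Let T ~ Binomial(N, p) and for each observed value t define b(t, N, α) as the unique solution in (0,1) of Σ_{k=0}^{t} C(N,k) b^k (1−b)^{N−k} = α when t < N, and b(N, N, α) = 1. Then P(p ≤ b(T, N, α)) ≥ 1 − α. -/
/-- Derivative of the binomial CDF (as a polynomial in the success probability). -/
lemma cp_hasDerivAt (N : ℕ) : ∀ t, t < N → ∀ x : ℝ,
    HasDerivAt (fun y : ℝ => ∑ k ∈ Finset.range (t + 1),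
        (N.choose k : ℝ) * y ^ k * (1 - y) ^ (N - k))
      (-(((N - t : ℕ) : ℝ) * (N.choose t) * x ^ t * (1 - x) ^ (N - t - 1))) x := by
  intro t
  induction t with
  | zero =>
    intro ht x
    have h1 : HasDerivAt (fun y : ℝ => 1 - y) (-1) x := (hasDerivAt_id x).const_sub 1
    have h2 := h1.fun_pow N
    have hfun : (fun y : ℝ => ∑ k ∈ Finset.range (0 + 1),
        (N.choose k : ℝ) * y ^ k * (1 - y) ^ (N - k)) = fun y : ℝ => (1 - y) ^ N := by
      funext y; simp
    rw [hfun]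
    refine h2.congr_deriv ?_; symm
    simp
  | succ t ih =>
    intro ht x
    have htN : t < N := by omega
    have hfun : (fun y : ℝ => ∑ k ∈ Finset.range (t + 1 + 1),
        (N.choose k : ℝ) * y ^ k * (1 - y) ^ (N - k)) =
        fun y : ℝ => (∑ k ∈ Finset.range (t + 1),
          (N.choose k : ℝ) * y ^ k * (1 - y) ^ (N - k)) +
          (N.choose (t + 1) : ℝ) * y ^ (t + 1) * (1 - y) ^ (N - (t + 1)) := by
      funext y; rw [Finset.sum_range_succ]
    rw [hfun]
    have h1 : HasDerivAt (fun y : ℝ => y ^ (t + 1)) (((t + 1 : ℕ) : ℝ) * x ^ t) x := by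
      simpa using hasDerivAt_pow (t + 1) x
    have hsub : HasDerivAt (fun y : ℝ => 1 - y) (-1) x := (hasDerivAt_id x).const_sub 1
    have h2 : HasDerivAt (fun y : ℝ => (1 - y) ^ (N - (t + 1)))
        ((((N - (t + 1) : ℕ)) : ℝ) * (1 - x) ^ (N - (t + 1) - 1) * (-1)) x := hsub.pow _
    have hterm : HasDerivAt (fun y : ℝ => (N.choose (t + 1) : ℝ) * y ^ (t + 1) *
        (1 - y) ^ (N - (t + 1)))
        ((N.choose (t + 1) : ℝ) * (((t + 1 : ℕ) : ℝ) * x ^ t * (1 - x) ^ (N - (t + 1)) +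
          x ^ (t + 1) * ((((N - (t + 1) : ℕ)) : ℝ) * (1 - x) ^ (N - (t + 1) - 1) * (-1)))) x := by
      have := (h1.mul h2).const_mul (N.choose (t + 1) : ℝ)
      simpa [mul_assoc] using this
    have := (ih htN x).fun_add hterm
    refine this.congr_deriv ?_; symm
    have key : (N.choose (t + 1) : ℝ) * ((t + 1 : ℕ) : ℝ) =
        (N.choose t : ℝ) * ((N : ℝ) - t) := by
      have h := Nat.choose_succ_right_eq N t
      have : ((N.choose (t + 1) * (t + 1) : ℕ) : ℝ) = ((N.choose t * (N - t) : ℕ) : ℝ) := by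
        exact_mod_cast congrArg (Nat.cast (R := ℝ)) h
      rw [Nat.cast_mul, Nat.cast_mul, Nat.cast_sub (le_of_lt htN)] at this
      push_cast at this ⊢
      linarith
    rw [Nat.cast_sub (by omega : t + 1 ≤ N), Nat.cast_sub (by omega : t ≤ N),
      show N - (t + 1) - 1 = N - t - 2 from by omega,
      show N - (t + 1) = N - t - 1 from by omega]
    push_cast at key ⊢
    linear_combination (-(x ^ t * (1 - x) ^ (N - t - 1))) * key

/-- The binomial CDF is antitone in the success probability on `[0,1]`. -/
lemma cp_antitoneOn (N t : ℕ) (ht : t < N) :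
    AntitoneOn (fun y : ℝ => ∑ k ∈ Finset.range (t + 1),
        (N.choose k : ℝ) * y ^ k * (1 - y) ^ (N - k)) (Set.Icc 0 1) := by
  apply antitoneOn_of_deriv_nonpos (convex_Icc 0 1)
  · apply Continuous.continuousOn
    apply continuous_finset_sum
    intro k _
    continuity
  · intro x hx
    exact (cp_hasDerivAt N t ht x).differentiableAt.differentiableWithinAt
  · intro x hx
    rw [interior_Icc] at hx
    rw [(cp_hasDerivAt N t ht x).deriv]
    have hx0 : (0:ℝ) ≤ x := le_of_lt hx.1
    have hx1 : (0:ℝ) ≤ 1 - x := by linarith [hx.2]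
    have : (0:ℝ) ≤ ((N - t : ℕ) : ℝ) * (N.choose t) * x ^ t * (1 - x) ^ (N - t - 1) := by
      apply mul_nonneg
      apply mul_nonneg
      apply mul_nonneg
      · exact Nat.cast_nonneg _
      · exact Nat.cast_nonneg _
      · exact pow_nonneg hx0 _
      · exact pow_nonneg hx1 _
    linarith

/-- Clopper–Pearson upper confidence bound coverage: if `b t` solves
`∑_{k=0}^{t} C(N,k) (b t)^k (1 - b t)^{N-k} = α` for every `t < N`, and `b N = 1`,
then the probability (under `T ~ Binomial(N,p)`) of the event `p ≤ b T` is at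
least `1 - α`. The probability is expressed as the sum over the values of `T`. -/
theorem clopper_pearson_upper_bound_coverage
    (N : ℕ) (hN : 1 ≤ N) (α : ℝ) (hα : α ∈ Set.Ioo (0:ℝ) 1)
    (p : ℝ) (hp : p ∈ Set.Icc (0:ℝ) 1)
    (b : ℕ → ℝ)
    (hb : ∀ t, t < N → b t ∈ Set.Ioo (0:ℝ) 1 ∧
      ∑ k ∈ Finset.range (t + 1),
        (N.choose k : ℝ) * (b t) ^ k * (1 - b t) ^ (N - k) = α)
    (hbN : b N = 1) :
    1 - α ≤
      ∑ t ∈ Finset.range (N + 1),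
        (if p ≤ b t then (N.choose t : ℝ) * p ^ t * (1 - p) ^ (N - t) else 0) := by
  obtain ⟨hp0, hp1⟩ := hp
  obtain ⟨hα0, hα1⟩ := hα
  set f : ℕ → ℝ := fun t => (N.choose t : ℝ) * p ^ t * (1 - p) ^ (N - t) with hf
  have hfnonneg : ∀ t, 0 ≤ f t := fun t =>
    mul_nonneg (mul_nonneg (Nat.cast_nonneg _) (pow_nonneg hp0 _))
      (pow_nonneg (by linarith) _)
  -- total sum is 1
  have htot : ∑ t ∈ Finset.range (N + 1), f t = 1 := by
    have h := add_pow p (1 - p) N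
    have : ∑ t ∈ Finset.range (N + 1), f t =
        ∑ t ∈ Finset.range (N + 1), p ^ t * (1 - p) ^ (N - t) * (N.choose t : ℝ) :=
      Finset.sum_congr rfl fun t _ => by rw [hf]; ring
    rw [this, ← h]
    norm_num
  -- split sum by the condition
  have hsplit := Finset.sum_filter_add_sum_filter_not (Finset.range (N + 1))
    (fun t => p ≤ b t) f
  rw [← Finset.sum_filter]
  -- bound the complement
  set S := Finset.filter (fun t => ¬ p ≤ b t) (Finset.range (N + 1)) with hS
  have hcomp : ∑ t ∈ S, f t ≤ α := by
    rcases S.eq_empty_or_nonempty with hSe | hSne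
    · rw [hSe, Finset.sum_empty]; linarith
    · set m := S.max' hSne with hm
      have hmS : m ∈ S := S.max'_mem hSne
      obtain ⟨hmrange, hmb⟩ := Finset.mem_filter.mp hmS
      have hmN : m < N := by
        rcases lt_or_eq_of_le (Nat.lt_succ_iff.mp (Finset.mem_range.mp hmrange)) with h | h
        · exact h
        · exfalso; apply hmb; rw [h, hbN]; exact hp1
      obtain ⟨hbm, hbsum⟩ := hb m hmN
      have hsub : S ⊆ Finset.range (m + 1) := by
        intro t htS
        exact Finset.mem_range.mpr (Nat.lt_succ_of_le (Finset.le_max' S t htS))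
      have h1 : ∑ t ∈ S, f t ≤ ∑ t ∈ Finset.range (m + 1), f t :=
        Finset.sum_le_sum_of_subset_of_nonneg hsub (fun t _ _ => hfnonneg t)
      have h2 : ∑ t ∈ Finset.range (m + 1), f t ≤
          ∑ k ∈ Finset.range (m + 1), (N.choose k : ℝ) * (b m) ^ k * (1 - b m) ^ (N - k) := by
        have := cp_antitoneOn N m hmN
          (Set.mem_Icc.mpr ⟨le_of_lt hbm.1, le_of_lt hbm.2⟩)
          (Set.mem_Icc.mpr ⟨hp0, hp1⟩)
          (le_of_lt (lt_of_not_ge hmb))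
        exact this
      linarith [hbsum ▸ le_trans h1 h2]
  have := hsplit
  linarith
end

section
/- Let X be an E-valued random variable, f : E → ℝ measurable, ρ ∈ ℝ, and suppose R̂ ⊇ {x : f(x) < ρ}. Let Z_1,...,Z_m be i.i.d. with law P_X(·|R̂) (assuming P_X(R̂) > 0). Then for α ∈ (0,1), P( π_ρ ≤ b(Σ_{k=1}^m 1{f(Z_k)<ρ}, m, α) · P_X(R̂) ) ≥ 1 − α, where π_ρ = P(f(X) < ρ) and b is the exact binomial upper confidence bound. -/
open MeasureTheory ProbabilityTheory

private lemma nat1 (n k : ℕ) : (n + 1) * n.choose k = (n + 1).choose (k + 1) * (k + 1) := by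
  simpa [Nat.succ_eq_add_one] using Nat.add_one_mul_choose_eq n k

private lemma nat2 (n k : ℕ) : (n + 1).choose (k + 1) * (n - k) = (n + 1) * n.choose (k + 1) := by
  have h := Nat.choose_succ_right_eq (n + 1) (k + 1)
  rw [Nat.succ_sub_succ] at h
  rw [← h, nat1 n (k + 1)]

private lemma one_sub_pow_hasDerivAt (j : ℕ) (p : ℝ) :
    HasDerivAt (fun x : ℝ => (1 - x) ^ j) (-(j * (1 - p) ^ (j - 1))) p := by
  have hi : HasDerivAt (fun x : ℝ => 1 - x) (-1) p := by
    simpa using (hasDerivAt_id p).const_sub 1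
  simpa [mul_comm, Function.comp_def] using (hasDerivAt_pow j (1 - p)).comp p hi

private lemma term_hasDerivAt (c : ℝ) (k j : ℕ) (p : ℝ) :
    HasDerivAt (fun x : ℝ => c * x ^ k * (1 - x) ^ j)
      (c * (k * p ^ (k - 1)) * (1 - p) ^ j - c * p ^ k * (j * (1 - p) ^ (j - 1))) p := by
  have h1 : HasDerivAt (fun x : ℝ => x ^ k) ((k : ℝ) * p ^ (k - 1)) p := hasDerivAt_pow k p
  have := (h1.const_mul c).mul (one_sub_pow_hasDerivAt j p)
  refine this.congr_deriv ?_
  ring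

private lemma binomCDF_hasDerivAt (m : ℕ) (t : ℕ) (ht : t + 1 ≤ m) (p : ℝ) :
    HasDerivAt (fun x : ℝ => ∑ k ∈ Finset.range (t + 1),
        (m.choose k : ℝ) * x ^ k * (1 - x) ^ (m - k))
      (-((m : ℝ) * ((m - 1).choose t : ℝ) * p ^ t * (1 - p) ^ (m - 1 - t))) p := by
  induction t with
  | zero =>
      obtain ⟨a, rfl⟩ : ∃ a, m = a + 1 := ⟨m - 1, by omega⟩
      have h := term_hasDerivAt ((((a + 1).choose 0 : ℕ) : ℝ)) 0 (a + 1 - 0) p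
      simp only [zero_add, Finset.sum_range_one]
      convert h using 1
      simp [Nat.choose_zero_right]
  | succ t ih =>
      have key := (ih (by omega)).add
        (term_hasDerivAt ((m.choose (t + 1) : ℝ)) (t + 1) (m - (t + 1)) p)
      have hfun : (fun x : ℝ => ∑ k ∈ Finset.range (t + 1 + 1),
          (m.choose k : ℝ) * x ^ k * (1 - x) ^ (m - k))
          = fun x : ℝ => (∑ k ∈ Finset.range (t + 1),
          (m.choose k : ℝ) * x ^ k * (1 - x) ^ (m - k))
            + (m.choose (t + 1) : ℝ) * x ^ (t + 1) * (1 - x) ^ (m - (t + 1)) := by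
        funext x; rw [Finset.sum_range_succ]
      rw [hfun]
      refine key.congr_deriv (Eq.symm ?_)
      obtain ⟨a, rfl⟩ : ∃ a, m = t + 2 + a := ⟨m - (t + 2), by omega⟩
      have e1 : t + 2 + a - 1 = t + 1 + a := by omega
      have e2 : t + 1 + a - (t + 1) = a := by omega
      have e3 : t + 1 + a - t = a + 1 := by omega
      have e4 : t + 2 + a - (t + 1) = a + 1 := by omega
      have e5 : t + 1 - 1 = t := by omega
      have e6 : a + 1 - 1 = a := by omega
      rw [e1, e2, e3, e4, e5, e6]
      have h1 : ((t + 2 + a) * (t + 1 + a).choose t : ℝ)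
          = ((t + 2 + a).choose (t + 1) * (t + 1) : ℝ) := by
        have := nat1 (t + 1 + a) t
        rw [show t + 1 + a + 1 = t + 2 + a from by omega] at this
        exact_mod_cast this
      have h2 : ((t + 2 + a).choose (t + 1) * (a + 1) : ℝ)
          = ((t + 2 + a) * (t + 1 + a).choose (t + 1) : ℝ) := by
        have := nat2 (t + 1 + a) t
        rw [show t + 1 + a + 1 = t + 2 + a from by omega, show t + 1 + a - t = a + 1 from by omega]
          at this
        exact_mod_cast this
      push_cast at h1 h2 ⊢
      linear_combination (p ^ t * (1 - p) ^ (a + 1)) * h1 + (p ^ (t + 1) * (1 - p) ^ a) * h2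

private lemma binomCDF_anti (m t : ℕ) (ht : t + 1 ≤ m) {p p' : ℝ}
    (hp : p ∈ Set.Icc (0:ℝ) 1) (hp' : p' ∈ Set.Icc (0:ℝ) 1) (hpp : p ≤ p') :
    ∑ k ∈ Finset.range (t + 1), (m.choose k : ℝ) * p' ^ k * (1 - p') ^ (m - k) ≤
      ∑ k ∈ Finset.range (t + 1), (m.choose k : ℝ) * p ^ k * (1 - p) ^ (m - k) := by
  set F : ℝ → ℝ :=
    fun x => ∑ k ∈ Finset.range (t + 1), (m.choose k : ℝ) * x ^ k * (1 - x) ^ (m - k) with hF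
  have hderiv : ∀ x : ℝ, HasDerivAt F
      (-((m : ℝ) * ((m - 1).choose t : ℝ) * x ^ t * (1 - x) ^ (m - 1 - t))) x :=
    fun x => binomCDF_hasDerivAt m t ht x
  have hdiff : Differentiable ℝ F := fun x => (hderiv x).differentiableAt
  have hanti : AntitoneOn F (Set.Icc 0 1) := by
    apply antitoneOn_of_deriv_nonpos (convex_Icc 0 1) hdiff.continuous.continuousOn
      (hdiff.differentiableOn)
    intro x hx
    rw [interior_Icc] at hx
    rw [(hderiv x).deriv]
    have h1 : (0:ℝ) ≤ x ^ t := pow_nonneg hx.1.le t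
    have h2 : (0:ℝ) ≤ (1 - x) ^ (m - 1 - t) := pow_nonneg (by linarith [hx.2]) _
    have h3 : (0:ℝ) ≤ (m : ℝ) * ((m - 1).choose t : ℝ) * x ^ t * (1 - x) ^ (m - 1 - t) := by
      positivity
    linarith
  exact hanti hp hp' hpp

open scoped ENNReal

open scoped Classical in
private lemma count_card_le_eq {Ω E : Type*} [MeasurableSpace Ω] [MeasurableSpace E]
    (P : Measure Ω) [IsProbabilityMeasure P] {m : ℕ} (Z : Fin m → Ω → E)
    (hZmeas : ∀ k, Measurable (Z k))
    (hZindep : iIndepFun Z P)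
    (A : Set E) (hA : MeasurableSet A) (q : ℝ≥0∞) (hq : ∀ k, P (Z k ⁻¹' A) = q)
    (t : ℕ) :
    P {ω | (Finset.univ.filter (fun k => Z k ω ∈ A)).card ≤ t}
      = ∑ j ∈ Finset.range (t + 1), (m.choose j : ℝ≥0∞) * q ^ j * (1 - q) ^ (m - j) := by
  classical
  set Es : Finset (Fin m) → Set Ω :=
    fun s => ⋂ k, Z k ⁻¹' (if k ∈ s then A else Aᶜ) with hEs
  have hsets : ∀ (s : Finset (Fin m)) (k : Fin m),
      MeasurableSet (if k ∈ s then A else Aᶜ) := fun s k => by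
    by_cases hk : k ∈ s <;> simp [hk, hA, hA.compl]
  have hEsMeas : ∀ s, MeasurableSet (Es s) := fun s =>
    MeasurableSet.iInter fun k => (hZmeas k) (hsets s k)
  have hmem : ∀ (s : Finset (Fin m)) ω, ω ∈ Es s ↔ ∀ k, (Z k ω ∈ A ↔ k ∈ s) := by
    intro s ω
    simp only [hEs, Set.mem_iInter, Set.mem_preimage]
    refine forall_congr' fun k => ?_
    by_cases hk : k ∈ s <;> simp [hk]
  have hfil : ∀ (s : Finset (Fin m)) ω,
      (Finset.univ.filter (fun k => Z k ω ∈ A) = s) ↔ ∀ k, (Z k ω ∈ A ↔ k ∈ s) := by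
    intro s ω
    rw [Finset.ext_iff]
    refine forall_congr' fun k => ?_
    simp
  have hPEs : ∀ s : Finset (Fin m), P (Es s) = q ^ s.card * (1 - q) ^ (m - s.card) := by
    intro s
    have hprod := hZindep.measure_inter_preimage_eq_mul Finset.univ
      (sets := fun k => if k ∈ s then A else Aᶜ) (fun k _ => hsets s k)
    have hU : (⋂ k ∈ (Finset.univ : Finset (Fin m)),
        Z k ⁻¹' (if k ∈ s then A else Aᶜ)) = Es s := by
      simp [hEs]
    rw [hU] at hprod
    rw [hprod]
    have hcompl : ∀ k : Fin m, P (Z k ⁻¹' Aᶜ) = 1 - q := by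
      intro k
      rw [Set.preimage_compl, prob_compl_eq_one_sub ((hZmeas k) hA), hq k]
    calc (∏ k, P (Z k ⁻¹' (if k ∈ s then A else Aᶜ)))
        = ∏ k, (if k ∈ s then q else 1 - q) := by
          refine Finset.prod_congr rfl fun k _ => ?_
          by_cases hk : k ∈ s
          · rw [if_pos hk, if_pos hk, hq k]
          · rw [if_neg hk, if_neg hk, hcompl k]
      _ = q ^ s.card * (1 - q) ^ (m - s.card) := by
          rw [Finset.prod_ite, Finset.prod_const, Finset.prod_const,
            Finset.filter_univ_mem]
          congr 2
          rw [Finset.filter_not, Finset.filter_univ_mem,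
            Finset.card_sdiff_of_subset (Finset.subset_univ s), Finset.card_univ, Fintype.card_fin]
  have hdisj : Set.PairwiseDisjoint
      ↑(Finset.univ.filter (fun s : Finset (Fin m) => s.card ≤ t)) Es := by
    intro s _ s' _ hne
    rw [Function.onFun, Set.disjoint_left]
    intro ω h1 h2
    exact hne (((hfil s ω).2 ((hmem s ω).1 h1)).symm.trans ((hfil s' ω).2 ((hmem s' ω).1 h2)))
  have hset : {ω | (Finset.univ.filter (fun k => Z k ω ∈ A)).card ≤ t}
      = ⋃ s ∈ Finset.univ.filter (fun s : Finset (Fin m) => s.card ≤ t), Es s := by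
    ext ω
    simp only [Set.mem_setOf_eq, Set.mem_iUnion, Finset.mem_filter, Finset.mem_univ, true_and]
    constructor
    · intro h
      exact ⟨_, h, (hmem _ ω).2 ((hfil _ ω).1 rfl)⟩
    · rintro ⟨s, hs, hω⟩
      rw [(hfil s ω).2 ((hmem s ω).1 hω)]
      exact hs
  rw [hset, measure_biUnion_finset hdisj (fun s _ => hEsMeas s)]
  have hbu : Finset.univ.filter (fun s : Finset (Fin m) => s.card ≤ t)
      = (Finset.range (t + 1)).biUnion (fun j => Finset.powersetCard j Finset.univ) := by
    ext s
    simp [Finset.mem_powersetCard_univ, Nat.lt_succ_iff]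
  have hdisj2 : Set.PairwiseDisjoint ↑(Finset.range (t + 1))
      (fun j => Finset.powersetCard j (Finset.univ : Finset (Fin m))) := by
    intro i _ j _ hne
    rw [Function.onFun, Finset.disjoint_left]
    intro s h1 h2
    rw [Finset.mem_powersetCard_univ] at h1 h2
    exact hne (h1.symm.trans h2)
  rw [hbu, Finset.sum_biUnion hdisj2]
  refine Finset.sum_congr rfl fun j hj => ?_
  have hinner : ∀ s ∈ Finset.powersetCard j (Finset.univ : Finset (Fin m)),
      P (Es s) = q ^ j * (1 - q) ^ (m - j) := by
    intro s hs
    rw [hPEs s, (Finset.mem_powersetCard_univ.1 hs)]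
  rw [Finset.sum_congr rfl hinner, Finset.sum_const, Finset.card_powersetCard,
    Finset.card_univ, Fintype.card_fin, nsmul_eq_mul, mul_assoc]

/-- Confidence bound for the deterministic function case: if `{x : f(x) < ρ} ⊆ R̂`
and `Z_1, ..., Z_m` are i.i.d. with law `P_X(·|R̂)`, then with `b` the exact
binomial upper confidence bound,
`P(π_ρ ≤ b(∑_k 1{f(Z_k)<ρ}, m, α) · P_X(R̂)) ≥ 1 - α` where `π_ρ = P(f(X) < ρ)`. -/
theorem importance_sampling_confidence_bound_deterministic
    {Ω E : Type*} [MeasurableSpace Ω] [MeasurableSpace E]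
    (P : Measure Ω) [IsProbabilityMeasure P]
    (X : Ω → E) (hX : Measurable X)
    (R : Set E) (hR : MeasurableSet R) (hRpos : 0 < P.map X R)
    (f : E → ℝ) (hf : Measurable f) (ρ : ℝ)
    (hsub : f ⁻¹' Set.Iio ρ ⊆ R)
    (m : ℕ) (hm : 1 ≤ m)
    (Z : Fin m → Ω → E) (hZmeas : ∀ k, Measurable (Z k))
    (hZlaw : ∀ k, P.map (Z k) = (P.map X)[|R])
    (hZindep : iIndepFun Z P)
    (α : ℝ) (hα : α ∈ Set.Ioo (0:ℝ) 1)
    (b : ℕ → ℝ)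
    (hb : ∀ t, t < m → b t ∈ Set.Ioo (0:ℝ) 1 ∧
      ∑ k ∈ Finset.range (t + 1),
        (m.choose k : ℝ) * (b t) ^ k * (1 - b t) ^ (m - k) = α)
    (hbm : b m = 1) :
    1 - ENNReal.ofReal α ≤
      P {ω | (P {ω' | f (X ω') < ρ}).toReal ≤
        b (∑ k, if f (Z k ω) < ρ then (1:ℕ) else 0) * ((P.map X) R).toReal} := by
  classical
  obtain ⟨hα0, hα1⟩ := hα
  set μ := P.map X with hμ
  haveI : IsProbabilityMeasure μ := Measure.isProbabilityMeasure_map hX.aemeasurable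
  set A : Set E := f ⁻¹' Set.Iio ρ with hA_def
  have hA : MeasurableSet A := hf measurableSet_Iio
  have hRne : μ R ≠ 0 := hRpos.ne'
  have hRtop : μ R ≠ ⊤ := measure_ne_top μ R
  set q : ℝ≥0∞ := μ[|R] A with hq_def
  have hq_eq : q = (μ R)⁻¹ * μ A := by
    rw [hq_def, ProbabilityTheory.cond_apply hR, Set.inter_eq_self_of_subset_right hsub]
  have hμA : μ A = q * μ R := by
    rw [hq_eq, mul_comm ((μ R)⁻¹) (μ A), mul_assoc, ENNReal.inv_mul_cancel hRne hRtop, mul_one]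
  have hq_le_one : q ≤ 1 := by
    rw [hq_eq]
    calc (μ R)⁻¹ * μ A ≤ (μ R)⁻¹ * μ R := mul_le_mul_right (measure_mono hsub) _
      _ = 1 := ENNReal.inv_mul_cancel hRne hRtop
  have hq_top : q ≠ ⊤ := (hq_le_one.trans_lt ENNReal.one_lt_top).ne
  set qr : ℝ := q.toReal with hqr
  have hqr_mem : qr ∈ Set.Icc (0:ℝ) 1 := by
    constructor
    · exact ENNReal.toReal_nonneg
    · have := ENNReal.toReal_mono ENNReal.one_ne_top hq_le_one
      simpa using this
  have hqA : ∀ k, P (Z k ⁻¹' A) = q := fun k => by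
    rw [← Measure.map_apply (hZmeas k) hA, hZlaw k]
  have hπ : P {ω' | f (X ω') < ρ} = μ A := by
    rw [hμ, Measure.map_apply hX hA]
    rfl
  have hPR_pos : (0:ℝ) < (μ R).toReal := ENNReal.toReal_pos hRne hRtop
  have hπr : (P {ω' | f (X ω') < ρ}).toReal = qr * (μ R).toReal := by
    rw [hπ, hμA, ENNReal.toReal_mul]
  set T : Ω → ℕ := fun ω => ∑ k, if f (Z k ω) < ρ then (1:ℕ) else 0 with hT
  have hTle : ∀ ω, T ω ≤ m := by
    intro ω
    calc T ω ≤ ∑ _k : Fin m, 1 := Finset.sum_le_sum (fun k _ => by split <;> simp)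
      _ = m := by simp
  have hTcard : ∀ ω, T ω = (Finset.univ.filter (fun k => Z k ω ∈ A)).card := by
    intro ω
    rw [hT, Finset.card_filter]
    refine Finset.sum_congr rfl fun k _ => ?_
    congr 1
  have hTmeas : Measurable T := by
    apply Finset.measurable_sum
    intro k _
    exact Measurable.ite ((hZmeas k) hA) measurable_const measurable_const
  have hGset : {ω | (P {ω' | f (X ω') < ρ}).toReal ≤
        b (∑ k, if f (Z k ω) < ρ then (1:ℕ) else 0) * (μ R).toReal}
      = {ω | qr ≤ b (T ω)} := by
    ext ω
    simp only [Set.mem_setOf_eq, hT]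
    rw [hπr, mul_le_mul_iff_of_pos_right hPR_pos]
  set Bad : Set Ω := {ω | b (T ω) < qr} with hBad
  have hBadMeas : MeasurableSet Bad :=
    (measurable_from_top.comp hTmeas : Measurable fun ω => b (T ω)) measurableSet_Iio
  have hBadLe : P Bad ≤ ENNReal.ofReal α := by
    by_cases hS : ∃ t0, t0 ≤ m ∧ b t0 < qr
    · obtain ⟨t0, ht0m, ht0⟩ := hS
      set S := (Finset.range (m + 1)).filter (fun t => b t < qr) with hSdef
      have hSne : S.Nonempty := ⟨t0, by simp [hSdef, Nat.lt_succ_iff, ht0m, ht0]⟩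
      set ts := S.max' hSne with hts
      have htsmem := S.max'_mem hSne
      simp only [hSdef, Finset.mem_filter, Finset.mem_range, Nat.lt_succ_iff] at htsmem
      obtain ⟨htsm, htsq⟩ := htsmem
      have hts_lt : ts < m := by
        rcases lt_or_eq_of_le htsm with h | h
        · exact h
        · rw [h, hbm] at htsq
          exact absurd htsq (not_lt.mpr hqr_mem.2)
      obtain ⟨hbts_mem, hbts_sum⟩ := hb ts hts_lt
      have hsub2 : Bad ⊆ {ω | (Finset.univ.filter (fun k => Z k ω ∈ A)).card ≤ ts} := by
        intro ω hω
        have hmemS : T ω ∈ S := by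
          simp only [hSdef, Finset.mem_filter, Finset.mem_range, Nat.lt_succ_iff]
          exact ⟨hTle ω, hω⟩
        have hle := Finset.le_max' S (T ω) hmemS
        rw [Set.mem_setOf_eq, ← hTcard ω]
        exact hle
      have hdist := count_card_le_eq P Z hZmeas hZindep A hA q hqA ts
      have hterm_ne_top : ∀ j ∈ Finset.range (ts + 1),
          (m.choose j : ℝ≥0∞) * q ^ j * (1 - q) ^ (m - j) ≠ ⊤ := by
        intro j _
        exact ENNReal.mul_ne_top
          (ENNReal.mul_ne_top (ENNReal.natCast_ne_top _) (ENNReal.pow_ne_top hq_top))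
          (ENNReal.pow_ne_top (tsub_le_self.trans_lt ENNReal.one_lt_top).ne)
      have hsum_ne_top : (∑ j ∈ Finset.range (ts + 1),
          (m.choose j : ℝ≥0∞) * q ^ j * (1 - q) ^ (m - j)) ≠ ⊤ := by
        exact (ENNReal.sum_lt_top.2 fun j hj => (hterm_ne_top j hj).lt_top).ne
      have h1q : (1 - q).toReal = 1 - qr := by
        rw [ENNReal.toReal_sub_of_le hq_le_one ENNReal.one_ne_top, ENNReal.toReal_one]
      have htoReal : (∑ j ∈ Finset.range (ts + 1),
          (m.choose j : ℝ≥0∞) * q ^ j * (1 - q) ^ (m - j)).toReal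
          = ∑ j ∈ Finset.range (ts + 1), (m.choose j : ℝ) * qr ^ j * (1 - qr) ^ (m - j) := by
        rw [ENNReal.toReal_sum hterm_ne_top]
        refine Finset.sum_congr rfl fun j _ => ?_
        rw [ENNReal.toReal_mul, ENNReal.toReal_mul, ENNReal.toReal_pow, ENNReal.toReal_pow,
          h1q, ← hqr]
        simp
      calc P Bad ≤ P {ω | (Finset.univ.filter (fun k => Z k ω ∈ A)).card ≤ ts} :=
            measure_mono hsub2
        _ = ∑ j ∈ Finset.range (ts + 1), (m.choose j : ℝ≥0∞) * q ^ j * (1 - q) ^ (m - j) :=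
            hdist
        _ ≤ ENNReal.ofReal α := by
            rw [ENNReal.le_ofReal_iff_toReal_le hsum_ne_top hα0.le, htoReal, ← hbts_sum]
            exact binomCDF_anti m ts hts_lt ⟨hbts_mem.1.le, hbts_mem.2.le⟩ hqr_mem htsq.le
    · have hBadEmpty : Bad = ∅ := by
        ext ω
        simp only [hBad, Set.mem_setOf_eq, Set.mem_empty_iff_false, iff_false, not_lt]
        by_contra h
        push_neg at h
        exact hS ⟨T ω, hTle ω, h⟩
      simp [hBadEmpty]
  have hcompl : {ω | qr ≤ b (T ω)} = Badᶜ := by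
    ext ω
    simp [hBad, not_lt]
  rw [hGset, hcompl, prob_compl_eq_one_sub hBadMeas]
  exact tsub_le_tsub_left hBadLe 1
end
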